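/- Let v ∈ ℝ^q, let (x^v, z^v) be an optimal solution of (P(v)) and let w^v be an optimal solution of (D(v)). Then x^v is an optimal solution of the weighted sum scalarization (WS(w^v)): (w^v)ᵀΓ(x^v) = inf_{x∈X} (w^v)ᵀΓ(x). -/

import Mathlib

open Set Pointwise

noncomputable section

/-- Dot product on `Fin q → ℝ`. -/
def dotp {q : ℕ} (w y : Fin q → ℝ) : ℝ := ∑ i, w i * y i

/-- `N` is a norm on `Fin q → ℝ`. -/
def IsNormFn {q : ℕ} (N : (Fin q → ℝ) → ℝ) : Prop :=
  (∀ z, N z = 0 ↔ z = 0) ∧ (∀ (a : ℝ) (z : Fin q → ℝ), N (a • z) = |a| * N z) ∧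
    (∀ z w, N (z + w) ≤ N z + N w)

/-- Dual norm of `N`. -/
def dualNormFn {q : ℕ} (N : (Fin q → ℝ) → ℝ) (w : Fin q → ℝ) : ℝ :=
  sSup ((fun z => dotp w z) '' {z | N z ≤ 1})

/-- Distance (w.r.t. the norm `N`) from a point to a set. -/
def distFn {q : ℕ} (N : (Fin q → ℝ) → ℝ) (v : Fin q → ℝ) (A : Set (Fin q → ℝ)) : ℝ :=
  sInf ((fun y => N (v - y)) '' A)

/-- Dual cone of a set. -/
def dualCone' {q : ℕ} (C : Set (Fin q → ℝ)) : Set (Fin q → ℝ) :=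
  {w | ∀ y ∈ C, 0 ≤ dotp w y}

lemma dotp_sub' {q : ℕ} (w a b : Fin q → ℝ) : dotp w (a - b) = dotp w a - dotp w b := by
  simp [dotp, Pi.sub_apply, mul_sub, Finset.sum_sub_distrib]

lemma dotp_add' {q : ℕ} (w a b : Fin q → ℝ) : dotp w (a + b) = dotp w a + dotp w b := by
  simp [dotp, Pi.add_apply, mul_add, Finset.sum_add_distrib]

lemma dotp_smul' {q : ℕ} (t : ℝ) (w z : Fin q → ℝ) : dotp w (t • z) = t * dotp w z := by
  simp [dotp, Finset.mul_sum, mul_left_comm]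

lemma normFn_nonneg {q : ℕ} {N : (Fin q → ℝ) → ℝ} (hN : IsNormFn N) (z : Fin q → ℝ) :
    0 ≤ N z := by
  have h0 : N 0 = 0 := (hN.1 0).2 rfl
  have hneg : N (-z) = N z := by
    have := hN.2.1 (-1) z; simpa using this
  have := hN.2.2 z (-z)
  simp [h0, hneg] at this
  linarith

lemma normFn_le_mul_norm {q : ℕ} {N : (Fin q → ℝ) → ℝ} (hN : IsNormFn N) (z : Fin q → ℝ) :
    N z ≤ (∑ i, N (Pi.single i 1)) * ‖z‖ := by
  have h0 : N 0 = 0 := (hN.1 0).2 rfl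
  have hz : z = ∑ i, Pi.single i (z i) := (Finset.univ_sum_single z).symm
  calc N z = N (∑ i, Pi.single i (z i)) := by rw [← hz]
    _ ≤ ∑ i, N (Pi.single i (z i)) :=
        Finset.le_sum_of_subadditive N h0.le hN.2.2 _ _
    _ ≤ ∑ i, N (Pi.single i 1) * ‖z‖ := by
        apply Finset.sum_le_sum
        intro i _
        have : (Pi.single i (z i) : Fin q → ℝ) = (z i) • (Pi.single i 1 : Fin q → ℝ) := by
          ext j; by_cases h : j = i <;> simp [Pi.single_apply, h]
        rw [this, hN.2.1]
        have h1 : |z i| ≤ ‖z‖ := by simpa using norm_le_pi_norm z i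
        have h2 : 0 ≤ N (Pi.single i (1:ℝ)) := normFn_nonneg hN _
        calc |z i| * N (Pi.single i 1) ≤ ‖z‖ * N (Pi.single i 1) := by nlinarith [abs_nonneg (z i)]
          _ = N (Pi.single i 1) * ‖z‖ := mul_comm _ _
    _ = (∑ i, N (Pi.single i 1)) * ‖z‖ := by rw [Finset.sum_mul]

lemma normFn_continuous {q : ℕ} {N : (Fin q → ℝ) → ℝ} (hN : IsNormFn N) : Continuous N := by
  set K := ∑ i, N ((Pi.single i 1 : Fin q → ℝ)) with hK
  have hKnn : 0 ≤ K := Finset.sum_nonneg fun i _ => normFn_nonneg hN _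
  apply (LipschitzWith.of_dist_le_mul (K := K.toNNReal) (f := N) ?_).continuous
  intro x y
  have hsub : ∀ a b : Fin q → ℝ, N a - N b ≤ N (a - b) := by
    intro a b
    have h := hN.2.2 (a - b) b
    rw [sub_add_cancel] at h
    linarith
  have h1 : N x - N y ≤ N (x - y) := hsub x y
  have h2 : N y - N x ≤ N (x - y) := by
    have := hsub y x
    have hnn : N (y - x) = N (x - y) := by
      have := hN.2.1 (-1) (x - y); simpa [neg_sub] using this
    linarith
  have h3 : N (x - y) ≤ K * ‖x - y‖ := normFn_le_mul_norm hN _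
  have : dist (N x) (N y) ≤ K * dist x y := by
    rw [Real.dist_eq, dist_eq_norm]
    rcases abs_cases (N x - N y) with ⟨he, _⟩ | ⟨he, _⟩ <;> rw [he] <;> linarith
  simpa [Real.coe_toNNReal K hKnn] using this

/-- key: pairing bounded by norm when dual norm ≤ 1 -/
lemma dotp_le_normFn {q : ℕ} {N : (Fin q → ℝ) → ℝ} (hN : IsNormFn N)
    {w : Fin q → ℝ} (hw : dualNormFn N w ≤ 1) (z : Fin q → ℝ) :
    dotp w z ≤ N z := by
  by_cases hz : z = 0
  · simp [hz, dotp, (hN.1 0).2 rfl]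
  -- minimum of N on the unit sphere
  have hzn : ‖z‖ ≠ 0 := norm_ne_zero_iff.2 hz
  have hsph : IsCompact (Metric.sphere (0 : Fin q → ℝ) 1) := isCompact_sphere 0 1
  have hmem : (‖z‖⁻¹ • z) ∈ Metric.sphere (0 : Fin q → ℝ) 1 := by
    simp [norm_smul, inv_mul_cancel₀ hzn]
  obtain ⟨z₀, hz₀S, hz₀min⟩ := hsph.exists_isMinOn ⟨_, hmem⟩ (normFn_continuous hN).continuousOn
  set m := N z₀ with hm
  have hz₀ne : z₀ ≠ 0 := by
    intro h
    have : ‖z₀‖ = 1 := by simpa using hz₀S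
    rw [h] at this; simp at this
  have hmpos : 0 < m := by
    rcases lt_or_eq_of_le (normFn_nonneg hN z₀) with h | h
    · exact h
    · exact absurd ((hN.1 z₀).1 h.symm) hz₀ne
  -- N u ≥ m ‖u‖ for all u
  have hlow : ∀ u : Fin q → ℝ, m * ‖u‖ ≤ N u := by
    intro u
    by_cases hu : u = 0
    · simp [hu, (hN.1 0).2 rfl]
    · have hun : ‖u‖ ≠ 0 := norm_ne_zero_iff.2 hu
      have humem : (‖u‖⁻¹ • u) ∈ Metric.sphere (0 : Fin q → ℝ) 1 := by
        simp [norm_smul, inv_mul_cancel₀ hun]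
      have := hz₀min humem
      have heq : N u = ‖u‖ * N (‖u‖⁻¹ • u) := by
        rw [hN.2.1, abs_of_nonneg (inv_nonneg.2 (norm_nonneg u))]
        field_simp
      rw [heq]
      have hml : m ≤ N (‖u‖⁻¹ • u) := this
      nlinarith [norm_nonneg u]
  -- boundedness of the dual sup set
  have hbdd : BddAbove ((fun z => dotp w z) '' {z | N z ≤ 1}) := by
    refine ⟨(∑ i, |w i|) * m⁻¹, ?_⟩
    rintro _ ⟨u, hu, rfl⟩
    have h1 : m * ‖u‖ ≤ 1 := (hlow u).trans hu
    have hun : ‖u‖ ≤ m⁻¹ := by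
      rw [← one_div]
      exact (le_div_iff₀ hmpos).2 (by linarith)
    show dotp w u ≤ _
    calc dotp w u ≤ ∑ i, |w i| * |u i| := by
          apply Finset.sum_le_sum
          intro i _
          calc w i * u i ≤ |w i * u i| := le_abs_self _
            _ = |w i| * |u i| := abs_mul _ _
      _ ≤ ∑ i, |w i| * m⁻¹ := by
          apply Finset.sum_le_sum
          intro i _
          have hui : |u i| ≤ m⁻¹ := le_trans (by simpa using norm_le_pi_norm u i) hun
          exact mul_le_mul_of_nonneg_left hui (abs_nonneg _)
      _ = (∑ i, |w i|) * m⁻¹ := by rw [Finset.sum_mul]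
  -- the pairing bound
  have hNz : 0 < N z := by
    rcases lt_or_eq_of_le (normFn_nonneg hN z) with h | h
    · exact h
    · exact absurd ((hN.1 z).1 h.symm) hz
  have humem : ((N z)⁻¹ • z) ∈ {z | N z ≤ 1} := by
    simp only [Set.mem_setOf_eq, hN.2.1, abs_of_nonneg (inv_nonneg.2 hNz.le)]
    rw [inv_mul_cancel₀ hNz.ne']
  have hle : dotp w ((N z)⁻¹ • z) ≤ dualNormFn N w :=
    le_csSup hbdd ⟨_, humem, rfl⟩
  rw [dotp_smul'] at hle
  have := hle.trans hw
  calc dotp w z = N z * ((N z)⁻¹ * dotp w z) := by field_simp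
    _ ≤ N z * 1 := by nlinarith
    _ = N z := mul_one _

/-- if (xv, zv) is optimal for (P(v)) and wv is optimal for (D(v)),
then xv is an optimal solution of the weighted sum scalarization (WS(wv)). -/
theorem stmt4 {q n : ℕ}
    (N : (Fin q → ℝ) → ℝ) (hN : IsNormFn N)
    (C : Set (Fin q → ℝ))
    (hCclosed : IsClosed C) (hCconv : Convex ℝ C)
    (hCcone : ∀ t : ℝ, 0 ≤ t → ∀ y ∈ C, t • y ∈ C)
    (hCsolid : (interior C).Nonempty)
    (hCpointed : ∀ y ∈ C, -y ∈ C → y = 0)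
    (hCnontriv : {(0 : Fin q → ℝ)} ⊂ C ∧ C ⊂ Set.univ)
    (X : Set (Fin n → ℝ)) (hX : IsCompact X) (hXconv : Convex ℝ X)
    (hXint : (interior X).Nonempty)
    (Γ : (Fin n → ℝ) → (Fin q → ℝ)) (hΓ : ContinuousOn Γ X)
    (hΓconv : ∀ x₁ ∈ X, ∀ x₂ ∈ X, ∀ t : ℝ, t ∈ Icc (0:ℝ) 1 →
      t • Γ x₁ + (1 - t) • Γ x₂ - Γ (t • x₁ + (1 - t) • x₂) ∈ C)
    (v : Fin q → ℝ) (xv : Fin n → ℝ) (zv : Fin q → ℝ) (wv : Fin q → ℝ)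
    (hxv : xv ∈ X) (hfeas : v + zv - Γ xv ∈ C)
    (hzopt : N zv = distFn N v (Γ '' X + C))
    (hwv : wv ∈ dualCone' C) (hwnorm : dualNormFn N wv ≤ 1)
    (hwopt : sInf ((fun x => dotp wv (Γ x)) '' X) - dotp wv v
      = distFn N v (Γ '' X + C)) :
    dotp wv (Γ xv) = sInf ((fun x => dotp wv (Γ x)) '' X) := by
  have hcont : Continuous fun y : Fin q → ℝ => dotp wv y := by
    unfold dotp
    exact continuous_finset_sum _ fun i _ => continuous_const.mul (continuous_apply i)
  have hScomp : IsCompact ((fun x => dotp wv (Γ x)) '' X) :=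
    hX.image_of_continuousOn (hcont.comp_continuousOn hΓ)
  have hbb : BddBelow ((fun x => dotp wv (Γ x)) '' X) := hScomp.bddBelow
  have hge : sInf ((fun x => dotp wv (Γ x)) '' X) ≤ dotp wv (Γ xv) :=
    csInf_le hbb ⟨xv, hxv, rfl⟩
  have hzle : dotp wv zv ≤ N zv := dotp_le_normFn hN hwnorm zv
  have hc : 0 ≤ dotp wv (v + zv - Γ xv) := hwv _ hfeas
  have hid : dotp wv (v + zv - Γ xv) = dotp wv v + dotp wv zv - dotp wv (Γ xv) := by
    rw [dotp_sub', dotp_add']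
  rw [← hzopt] at hwopt
  linarith
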